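/- Let R be a Noetherian domain with fraction field K, R ≠ K, and let S be a subring of K containing R with S ≠ K. Then S is a finite R-module if and only if the R-adic topology and the S-adic topology on K agree. -/

import Mathlib

open Topology

/-- The collection `{aR + b : a ∈ K^×, b ∈ K}`, a basis for the `R`-adic topology. -/
def adicBasis {K : Type*} [Field K] (R : Subring K) : Set (Set K) :=
  {s | ∃ a b : K, a ≠ 0 ∧ s = {x | ∃ r ∈ R, x = a * r + b}}

/-- The `R`-adic topology on `K`: the topology with basis `{aR + b : a ∈ K^×, b ∈ K}`. -/
def adicTopology {K : Type*} [Field K] (R : Subring K) : TopologicalSpace K :=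
  TopologicalSpace.generateFrom (adicBasis R)

/-- `S` is a finite `R`-module: it is generated, as an `R`-module, by finitely many
elements of `S`. -/
def IsFiniteModuleOver {K : Type*} [Field K] (R S : Subring K) : Prop :=
  ∃ t : Finset K, (↑t : Set K) ⊆ (S : Set K) ∧
    ∀ s ∈ S, ∃ c : K → K, (∀ x ∈ t, c x ∈ R) ∧ s = ∑ x ∈ t, c x * x

/-- A set each of whose points has a basic set around it inside the set is open in the
generated topology. -/
lemma open_of_pieces {K : Type*} (B : Set (Set K)) (s : Set K)
    (h : ∀ x ∈ s, ∃ u ∈ B, x ∈ u ∧ u ⊆ s) :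
    TopologicalSpace.GenerateOpen B s := by
  have hs : s = ⋃₀ {u | u ∈ B ∧ u ⊆ s} := by
    apply Set.Subset.antisymm
    · intro x hx
      obtain ⟨u, hu, hxu, hus⟩ := h x hx
      exact ⟨u, ⟨hu, hus⟩, hxu⟩
    · rintro x ⟨u, ⟨-, hus⟩, hxu⟩
      exact hus hxu
  rw [hs]
  exact TopologicalSpace.GenerateOpen.sUnion _ fun u hu => .basic u hu.1

/-- If there is a common denominator `d` with `dS ⊆ R`, the two adic topologies agree. -/
lemma adic_eq_of_denom {K : Type*} [Field K] (R S : Subring K) (hRS : R ≤ S)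
    (d : K) (hd : d ≠ 0) (hdS : ∀ s ∈ S, d * s ∈ R) :
    adicTopology R = adicTopology S := by
  apply le_antisymm
  · apply le_generateFrom
    rintro s ⟨a, b, ha, rfl⟩
    apply open_of_pieces
    rintro x ⟨r', hr', rfl⟩
    refine ⟨{y | ∃ r ∈ (R : Subring K), y = a * r + (a * r' + b)},
      ⟨a, a * r' + b, ha, rfl⟩, ⟨0, R.zero_mem, by ring⟩, ?_⟩
    rintro y ⟨r, hr, rfl⟩
    exact ⟨r + r', S.add_mem (hRS hr) hr', by ring⟩
  · apply le_generateFrom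
    rintro s ⟨a, b, ha, rfl⟩
    apply open_of_pieces
    rintro x ⟨r', hr', rfl⟩
    refine ⟨{y | ∃ r ∈ (S : Subring K), y = (a * d) * r + (a * r' + b)},
      ⟨a * d, a * r' + b, mul_ne_zero ha hd, rfl⟩, ⟨0, S.zero_mem, by ring⟩, ?_⟩
    rintro y ⟨r, hr, rfl⟩
    exact ⟨d * r + r', R.add_mem (hdS r hr) hr', by ring⟩

/-- If the two adic topologies agree, there is a common denominator `d` with `dS ⊆ R`. -/
lemma denom_of_adic_eq {K : Type*} [Field K] (R S : Subring K) (hRS : R ≤ S)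
    (hRfrac : ∀ x : K, ∃ a ∈ R, ∃ b ∈ R, b ≠ 0 ∧ x = a / b)
    (h : adicTopology R = adicTopology S) :
    ∃ d : K, d ≠ 0 ∧ ∀ s ∈ S, d * s ∈ R := by
  -- `R` itself is a basic open set for the `R`-adic topology
  have hRopen : TopologicalSpace.GenerateOpen (adicBasis R)
      {x : K | ∃ r ∈ R, x = 1 * r + 0} :=
    .basic _ ⟨1, 0, one_ne_zero, rfl⟩
  have hRopen' : TopologicalSpace.GenerateOpen (adicBasis S)
      {x : K | ∃ r ∈ R, x = 1 * r + 0} := by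
    have : (adicTopology S).IsOpen {x : K | ∃ r ∈ R, x = 1 * r + 0} := h ▸ hRopen
    exact this
  -- key claim by induction on the generated-open structure
  have key : ∀ u : Set K, TopologicalSpace.GenerateOpen (adicBasis S) u →
      (0 : K) ∈ u → ∃ c : K, c ≠ 0 ∧ ∀ s ∈ S, c * s ∈ u := by
    intro u hu
    induction hu with
    | basic u hu =>
      obtain ⟨a, b, ha, rfl⟩ := hu
      rintro ⟨r₀, hr₀, h0⟩
      refine ⟨a, ha, fun s hs => ⟨s + r₀, S.add_mem hs hr₀, ?_⟩⟩
      linear_combination h0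
    | univ => exact fun _ => ⟨1, one_ne_zero, fun _ _ => trivial⟩
    | inter u v hu hv ihu ihv =>
      rintro ⟨h0u, h0v⟩
      obtain ⟨c₁, hc₁, hcu⟩ := ihu h0u
      obtain ⟨c₂, hc₂, hcv⟩ := ihv h0v
      obtain ⟨a₁, ha₁, b₁, hb₁, hb₁0, hc₁eq⟩ := hRfrac c₁
      obtain ⟨a₂, ha₂, b₂, hb₂, hb₂0, hc₂eq⟩ := hRfrac c₂
      have ha₁0 : a₁ ≠ 0 := by
        intro h; apply hc₁; rw [hc₁eq, h, zero_div]
      have ha₂0 : a₂ ≠ 0 := by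
        intro h; apply hc₂; rw [hc₂eq, h, zero_div]
      refine ⟨a₁ * a₂, mul_ne_zero ha₁0 ha₂0, fun s hs => ⟨?_, ?_⟩⟩
      · have : a₁ * a₂ * s = c₁ * (b₁ * a₂ * s) := by
          rw [hc₁eq]; field_simp
        rw [this]
        exact hcu _ (S.mul_mem (S.mul_mem (hRS hb₁) (hRS ha₂)) hs)
      · have : a₁ * a₂ * s = c₂ * (b₂ * a₁ * s) := by
          rw [hc₂eq]; field_simp
        rw [this]
        exact hcv _ (S.mul_mem (S.mul_mem (hRS hb₂) (hRS ha₁)) hs)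
    | sUnion 𝒮 h𝒮 ih =>
      rintro ⟨u, hu𝒮, h0u⟩
      obtain ⟨c, hc, hcu⟩ := ih u hu𝒮 h0u
      exact ⟨c, hc, fun s hs => ⟨u, hu𝒮, hcu s hs⟩⟩
  obtain ⟨c, hc, hcmem⟩ := key _ hRopen' ⟨0, R.zero_mem, by ring⟩
  refine ⟨c, hc, fun s hs => ?_⟩
  obtain ⟨r, hr, hreq⟩ := hcmem s hs
  rw [hreq]
  simpa using hr

theorem statement2 {K : Type*} [Field K] (R S : Subring K)
    (hNoeth : IsNoetherianRing ↥R)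
    (hR : R ≠ ⊤) (hS : S ≠ ⊤) (hRS : R ≤ S)
    (hRfrac : ∀ x : K, ∃ a ∈ R, ∃ b ∈ R, b ≠ 0 ∧ x = a / b) :
    IsFiniteModuleOver R S ↔ adicTopology R = adicTopology S := by
  constructor
  · rintro ⟨t, ht, hgen⟩
    classical
    -- build a common denominator from denominators of the generators
    have hden : ∀ x : K, ∃ b : K, b ∈ R ∧ b ≠ 0 ∧ b * x ∈ R := by
      intro x
      obtain ⟨a, ha, b, hb, hb0, hx⟩ := hRfrac x
      exact ⟨b, hb, hb0, by rw [hx, mul_div_cancel₀ a hb0]; exact ha⟩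
    choose den hden1 hden2 hden3 using hden
    set d : K := ∏ x ∈ t, den x with hd
    have hd0 : d ≠ 0 := Finset.prod_ne_zero_iff.mpr fun x _ => hden2 x
    have hdx : ∀ x ∈ t, d * x ∈ R := by
      intro x hx
      rw [hd, ← Finset.mul_prod_erase t den hx, mul_comm (den x), mul_assoc]
      exact R.mul_mem (R.prod_mem fun y _ => hden1 y) (hden3 x)
    apply adic_eq_of_denom R S hRS d hd0
    intro s hs
    obtain ⟨c, hc, hseq⟩ := hgen s hs
    rw [hseq, Finset.mul_sum]
    refine R.sum_mem fun x hx => ?_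
    have : d * (c x * x) = c x * (d * x) := by ring
    rw [this]
    exact R.mul_mem (hc x hx) (hdx x hx)
  · intro h
    obtain ⟨c, hc0, hcS⟩ := denom_of_adic_eq R S hRS hRfrac h
    -- S, as an R-submodule of K, is contained in the cyclic module spanned by c⁻¹
    letI : Algebra ↥R K := inferInstance
    let N : Submodule ↥R K :=
      { carrier := (S : Set K)
        add_mem' := fun ha hb => S.add_mem ha hb
        zero_mem' := S.zero_mem
        smul_mem' := fun r x hx => by
          have : r • x = (r : K) * x := by
            rw [Algebra.smul_def]; rfl
          rw [this]
          exact S.mul_mem (hRS r.2) hx }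
    let M : Submodule ↥R K := Submodule.span ↥R {c⁻¹}
    have hNM : N ≤ M := by
      intro x hx
      have hcx : c * x ∈ R := hcS x hx
      refine Submodule.mem_span_singleton.mpr ⟨⟨c * x, hcx⟩, ?_⟩
      have : (⟨c * x, hcx⟩ : ↥R) • c⁻¹ = (c * x) * c⁻¹ := by
        rw [Algebra.smul_def]; rfl
      rw [this]
      field_simp
    have hMfg : M.FG := Submodule.fg_span_singleton _
    haveI : IsNoetherian ↥R ↥M := isNoetherian_of_fg_of_noetherian M hMfg
    have hNfg : N.FG := by
      have h1 : (N.comap M.subtype).FG := IsNoetherian.noetherian _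
      have h2 : Submodule.map M.subtype (N.comap M.subtype) = N := by
        rw [Submodule.map_comap_subtype]
        exact inf_eq_right.mpr hNM
      rw [← h2]
      exact h1.map _
    obtain ⟨t, htspan⟩ := hNfg
    refine ⟨t, ?_, ?_⟩
    · intro x hx
      have : x ∈ N := htspan ▸ Submodule.subset_span hx
      exact this
    · intro s hs
      have hsN : s ∈ Submodule.span ↥R (↑t : Set K) := by
        rw [htspan]; exact hs
      obtain ⟨f, -, hf⟩ := Submodule.mem_span_finset.mp hsN
      refine ⟨fun x => (f x : K), fun x _ => (f x).2, ?_⟩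
      rw [← hf]
      refine Finset.sum_congr rfl fun x _ => ?_
      rw [Algebra.smul_def]; rfl
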